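/- In the multi-variable Sl(2)-orbit setting, assume additionally that Λ is discrete (for every R > 0 the set {v ∈ Λ : ‖v‖ ≤ R} is finite). Then for every L ∈ ℝ, the set {v ∈ Λ : ∃ r ∈ ℝ^m with r_i ≥ 1 for all i, such that v is self-dual at r and satisfies the tadpole bound L at r} is finite. (Theorem 4 of the paper — finiteness of self-dual flux vacua — in the multi-variable Sl(2)-orbit approximation at zero axions.) -/

import Mathlib

/-- Theorem 4 of the paper in the multi-variable Sl(2)-orbit approximation at zero
axions: if the flux lattice `Λ` is discrete, then for every tadpole bound `L` only
finitely many fluxes `v ∈ Λ` are self-dual and satisfy the tadpole bound at some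
growth-sector coordinates `r` with all `r i ≥ 1`. -/
theorem finiteness_selfdual_multi_variable_sl2
    (V : Type*) [NormedAddCommGroup V] [InnerProductSpace ℝ V] [FiniteDimensional ℝ V]
    (m : ℕ)
    -- the orthogonal weight decomposition V = ⊕_{ℓ ∈ ℤ^m} V_ℓ, via its projections P ℓ
    (P : (Fin m → ℤ) → (V →ₗ[ℝ] V))
    (hPfin : (Function.support P).Finite)
    (hPsum : ∀ v : V, ∑ᶠ ℓ : Fin m → ℤ, P ℓ v = v)
    (hPproj : ∀ (ℓ : Fin m → ℤ) (v : V), P ℓ (P ℓ v) = P ℓ v)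
    (hPorth : ∀ ℓ ℓ' : Fin m → ℤ, ℓ ≠ ℓ' → ∀ u w : V, (inner ℝ (P ℓ u) (P ℓ' w) : ℝ) = 0)
    -- the boundary Weil operator C, a linear isometry with C(V_ℓ) = V_{-ℓ}
    (C : V →ₗ[ℝ] V)
    (hCiso : ∀ v : V, ‖C v‖ = ‖v‖)
    (hCw : ∀ ℓ : Fin m → ℤ,
      Submodule.map C (LinearMap.range (P ℓ)) = LinearMap.range (P (-ℓ)))
    -- the flux lattice Λ and the integrality gap λ
    (Λ : AddSubgroup V)
    (lam : ℝ) (hlam : 0 < lam)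
    (hgap : ∀ v ∈ Λ, ∀ ℓ : Fin m → ℤ, P ℓ v = 0 ∨ lam ≤ ‖P ℓ v‖)
    -- discreteness of the lattice
    (hdiscrete : ∀ R : ℝ, 0 < R → {v : V | v ∈ Λ ∧ ‖v‖ ≤ R}.Finite)
    (L : ℝ) :
    {v : V | v ∈ Λ ∧ ∃ r : Fin m → ℝ, (∀ i, 1 ≤ r i) ∧
      (∀ ℓ : Fin m → ℤ, (∏ i, r i ^ ℓ i) • P ℓ v = C (P (-ℓ) v)) ∧
      (∑ᶠ ℓ : Fin m → ℤ, (∏ i, r i ^ ℓ i) * ‖P ℓ v‖ ^ 2 ≤ L)}.Finite := by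
  classical
  set S : Finset (Fin m → ℤ) := hPfin.toFinset with hSdef
  have hR : (0:ℝ) < max (L / lam) 1 := lt_of_lt_of_le one_pos (le_max_right _ _)
  refine (hdiscrete (max (L / lam) 1) hR).subset ?_
  rintro v ⟨hvΛ, r, hr1, hsd, htad⟩
  refine ⟨hvΛ, ?_⟩
  have hw : ∀ ℓ : Fin m → ℤ, 0 < ∏ i, r i ^ ℓ i := fun ℓ =>
    Finset.prod_pos fun i _ => zpow_pos (lt_of_lt_of_le one_pos (hr1 i)) _
  have hnorm : ∀ ℓ : Fin m → ℤ, (∏ i, r i ^ ℓ i) * ‖P ℓ v‖ = ‖P (-ℓ) v‖ := by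
    intro ℓ
    have h := congrArg norm (hsd ℓ)
    rwa [norm_smul, Real.norm_eq_abs, abs_of_pos (hw ℓ), hCiso] at h
  have hsupp : ∀ ℓ : Fin m → ℤ, ℓ ∉ S → P ℓ v = 0 := by
    intro ℓ hℓ
    have : P ℓ = 0 := by
      by_contra h
      exact hℓ (hPfin.mem_toFinset.mpr h)
    simp [this]
  have hsum1 : (∑ ℓ ∈ S, P ℓ v) = v := by
    have h := finsum_eq_finset_sum_of_support_subset (fun ℓ => P ℓ v) (s := S) (by
      intro ℓ hℓ
      simp only [Function.mem_support] at hℓ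
      by_contra h
      exact hℓ (hsupp ℓ h))
    exact h.symm.trans (hPsum v)
  have hsum2 : (∑ᶠ ℓ : Fin m → ℤ, (∏ i, r i ^ ℓ i) * ‖P ℓ v‖ ^ 2)
      = ∑ ℓ ∈ S, (∏ i, r i ^ ℓ i) * ‖P ℓ v‖ ^ 2 := by
    refine finsum_eq_finset_sum_of_support_subset _ ?_
    intro ℓ hℓ
    simp only [Function.mem_support] at hℓ
    by_contra h
    exact hℓ (by rw [hsupp ℓ h]; simp)
  have hterm : ∀ ℓ : Fin m → ℤ, lam * ‖P ℓ v‖ ≤ (∏ i, r i ^ ℓ i) * ‖P ℓ v‖ ^ 2 := by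
    intro ℓ
    rcases hgap v hvΛ ℓ with h0 | hge
    · simp [h0]
    · have hne : P (-ℓ) v ≠ 0 := by
        intro h0
        have := hnorm ℓ
        rw [h0, norm_zero] at this
        have : ‖P ℓ v‖ = 0 := by
          have := mul_eq_zero.mp this
          rcases this with h | h
          · exact absurd h (ne_of_gt (hw ℓ))
          · exact h
        nlinarith
      have hge' : lam ≤ ‖P (-ℓ) v‖ := by
        rcases hgap v hvΛ (-ℓ) with h | h
        · exact absurd h hne
        · exact h
      have hx : (0:ℝ) ≤ ‖P ℓ v‖ := norm_nonneg _
      calc lam * ‖P ℓ v‖ ≤ ‖P (-ℓ) v‖ * ‖P ℓ v‖ := by nlinarith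
        _ = ((∏ i, r i ^ ℓ i) * ‖P ℓ v‖) * ‖P ℓ v‖ := by rw [hnorm ℓ]
        _ = (∏ i, r i ^ ℓ i) * ‖P ℓ v‖ ^ 2 := by ring
  have hvle : lam * ‖v‖ ≤ L := by
    calc lam * ‖v‖ = lam * ‖∑ ℓ ∈ S, P ℓ v‖ := by rw [hsum1]
      _ ≤ lam * ∑ ℓ ∈ S, ‖P ℓ v‖ :=
          mul_le_mul_of_nonneg_left (norm_sum_le _ _) hlam.le
      _ = ∑ ℓ ∈ S, lam * ‖P ℓ v‖ := Finset.mul_sum _ _ _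
      _ ≤ ∑ ℓ ∈ S, (∏ i, r i ^ ℓ i) * ‖P ℓ v‖ ^ 2 :=
          Finset.sum_le_sum fun ℓ _ => hterm ℓ
      _ = ∑ᶠ ℓ : Fin m → ℤ, (∏ i, r i ^ ℓ i) * ‖P ℓ v‖ ^ 2 := hsum2.symm
      _ ≤ L := htad
  have : ‖v‖ ≤ L / lam := (le_div_iff₀ hlam).mpr (by linarith [hvle])
  exact this.trans (le_max_left _ _)
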